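/- (Lions' Lemma / additive Schwarz operator representation) Let V be a finite-dimensional real inner product space and V = V₁ + ⋯ + V_N a (not necessarily direct) decomposition into subspaces. Let A be a symmetric positive definite bilinear form on V, and for each i let R_i be a symmetric positive definite bilinear form on V_i. Define the additive Schwarz preconditioner B⁻¹ implicitly by the operator B = Σᵢ Iᵢ Sᵢ⁻¹ Iᵢ*, where Iᵢ : Vᵢ → V is the inclusion and Sᵢ the operator of R_i. Then for every w ∈ V, ⟨B⁻¹ w, w⟩ = inf { Σᵢ R_i(w_i, w_i) : w_i ∈ V_i, Σᵢ w_i = w }. -/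

import Mathlib

/-- Lions' Lemma: variational representation of the additive Schwarz
preconditioner. -/
theorem stmt_3 {V : Type*} [NormedAddCommGroup V] [InnerProductSpace ℝ V]
    [FiniteDimensional ℝ V]
    (N : ℕ) (Vi : Fin N → Submodule ℝ V) (hspan : (⨆ i, Vi i) = ⊤)
    (R : ∀ i, LinearMap.BilinForm ℝ (Vi i))
    (hRsymm : ∀ i u v, R i u v = R i v u)
    (hRpos : ∀ i (v : Vi i), v ≠ 0 → 0 < R i v v)
    (S Sinv : ∀ i, (Vi i) →ₗ[ℝ] (Vi i))
    (hS : ∀ i (u v : Vi i), (inner ℝ (S i u) v : ℝ) = R i u v)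
    (hSinv : ∀ i, Sinv i ∘ₗ S i = LinearMap.id ∧ S i ∘ₗ Sinv i = LinearMap.id)
    (B Binv : V →ₗ[ℝ] V)
    (hB : B = ∑ i, (Vi i).subtype ∘ₗ Sinv i ∘ₗ LinearMap.adjoint (Vi i).subtype)
    (hBinv : Binv ∘ₗ B = LinearMap.id ∧ B ∘ₗ Binv = LinearMap.id) :
    ∀ w : V, (inner ℝ (Binv w) w : ℝ) =
      sInf {s : ℝ | ∃ wi : (i : Fin N) → Vi i,
        (∑ i, (wi i : V)) = w ∧ s = ∑ i, R i (wi i) (wi i)} := by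
  intro w
  set u : V := Binv w with hu
  set wstar : ∀ i, Vi i := fun i => Sinv i ((LinearMap.adjoint (Vi i).subtype) u)
    with hwstar
  have hRnn : ∀ i (x : Vi i), 0 ≤ R i x x := by
    intro i x
    rcases eq_or_ne x 0 with h | h
    · simp [h]
    · exact le_of_lt (hRpos i x h)
  -- Σ wstar = w
  have hsum : (∑ i, ((wstar i : V))) = w := by
    have h1 : B u = w := by
      have h2 := hBinv.2
      have : (B ∘ₗ Binv) w = LinearMap.id (R := ℝ) (M := V) w := by rw [h2]
      simpa using this
    rw [← h1, hB]
    simp [LinearMap.sum_apply, hwstar]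
  -- key pairing identity
  have key : ∀ wi : (i : Fin N) → Vi i, (∑ i, (wi i : V)) = w →
      (∑ i, R i (wstar i) (wi i)) = (inner ℝ u w : ℝ) := by
    intro wi hwi
    have hterm : ∀ i, R i (wstar i) (wi i) = (inner ℝ u ((wi i : V)) : ℝ) := by
      intro i
      rw [← hS i]
      have hSS : S i (wstar i) = (LinearMap.adjoint (Vi i).subtype) u := by
        have h2 := (hSinv i).2
        have : (S i ∘ₗ Sinv i) ((LinearMap.adjoint (Vi i).subtype) u)
            = LinearMap.id (R := ℝ) (M := Vi i) ((LinearMap.adjoint (Vi i).subtype) u) := by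
          rw [h2]
        simpa [hwstar] using this
      rw [hSS, LinearMap.adjoint_inner_left]
      rfl
    rw [Finset.sum_congr rfl fun i _ => hterm i, ← inner_sum, hwi]
  have hmem : (inner ℝ u w : ℝ) = ∑ i, R i (wstar i) (wstar i) := (key wstar hsum).symm
  have hlb : ∀ s ∈ {s : ℝ | ∃ wi : (i : Fin N) → Vi i,
      (∑ i, (wi i : V)) = w ∧ s = ∑ i, R i (wi i) (wi i)}, (inner ℝ u w : ℝ) ≤ s := by
    rintro s ⟨wi, hwi, rfl⟩
    have h0 : 0 ≤ ∑ i, R i (wi i - wstar i) (wi i - wstar i) :=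
      Finset.sum_nonneg fun i _ => hRnn i _
    have hexp : ∀ i, R i (wi i - wstar i) (wi i - wstar i)
        = R i (wi i) (wi i) - 2 * R i (wstar i) (wi i) + R i (wstar i) (wstar i) := by
      intro i
      simp only [map_sub, LinearMap.sub_apply]
      rw [hRsymm i (wi i) (wstar i)]
      ring
    rw [Finset.sum_congr rfl fun i _ => hexp i] at h0
    have hsplit : ∑ i, (R i (wi i) (wi i) - 2 * R i (wstar i) (wi i)
        + R i (wstar i) (wstar i))
        = (∑ i, R i (wi i) (wi i)) - 2 * (∑ i, R i (wstar i) (wi i))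
          + ∑ i, R i (wstar i) (wstar i) := by
      rw [Finset.sum_add_distrib, Finset.sum_sub_distrib, Finset.mul_sum]
    rw [hsplit, key wi hwi, ← hmem] at h0
    linarith
  have hleast : IsLeast {s : ℝ | ∃ wi : (i : Fin N) → Vi i,
      (∑ i, (wi i : V)) = w ∧ s = ∑ i, R i (wi i) (wi i)} (inner ℝ u w : ℝ) :=
    ⟨⟨wstar, hsum, hmem⟩, hlb⟩
  exact hleast.csInf_eq.symm
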